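/- Let A ∈ ℍ^{m×n} be a quaternion matrix with rank(A) = ν, and let W₁ ∈ ℍ^{n×m} with rank(W₁) = s ≤ ν. Let W₁ = S₁T₁ be a full rank factorization of W₁, i.e. S₁ ∈ ℍ^{n×s} and T₁ ∈ ℍ^{s×m} with rank(S₁) = rank(T₁) = s. Suppose there exists X₀ ∈ ℍ^{n×m} with X₀AX₀ = X₀, R_r(X₀) = R_r(W₁), and N_r(X₀) = N_r(W₁). Then: (a) the s×s quaternion matrix T₁AS₁ is invertible; (b) X₀ = S₁·(T₁AS₁)^{−1}·T₁, and this matrix also satisfies R_r(X₀) = R_r(S₁) and N_r(X₀) =N_r(T₁). -/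

import Mathlib

open Matrix

noncomputable section

/-- The real quaternion division ring ℍ. -/
abbrev Quat : Type := Quaternion ℝ

/-- Left range `R_l(A) = {xA : x ∈ ℍ^{1×m}} ⊆ ℍ^{1×n}`. -/
def leftRange {m n : ℕ} (A : Matrix (Fin m) (Fin n) Quat) : Set (Fin n → Quat) :=
  {y | ∃ x : Fin m → Quat, y = Matrix.vecMul x A}

/-- Left null space `N_l(A) = {x ∈ ℍ^{1×m} : xA = 0}`. -/
def leftNull {m n : ℕ} (A : Matrix (Fin m) (Fin n) Quat) : Set (Fin m → Quat) :=
  {x | Matrix.vecMul x A = 0}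

/-- Right range `R_r(A) = {Ax : x ∈ ℍ^{n×1}} ⊆ ℍ^{m×1}`. -/
def rightRange {m n : ℕ} (A : Matrix (Fin m) (Fin n) Quat) : Set (Fin m → Quat) :=
  {y | ∃ x : Fin n → Quat, y = Matrix.mulVec A x}

/-- Right null space `N_r(A) = {x ∈ ℍ^{n×1} : Ax = 0}`. -/
def rightNull {m n : ℕ} (A : Matrix (Fin m) (Fin n) Quat) : Set (Fin n → Quat) :=
  {x | Matrix.mulVec A x = 0}

/-- The rank of a quaternion matrix: the dimension of its left range
(the left ℍ-span of its rows) as a left ℍ-vector space. -/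
def qRank {m n : ℕ} (A : Matrix (Fin m) (Fin n) Quat) : ℕ :=
  Module.finrank Quat (Submodule.span Quat (Set.range (fun i : Fin m => A i)))

namespace Stmt18Aux

/-- column extraction of a product -/
lemma mul_col {a b c : ℕ} (P : Matrix (Fin a) (Fin b) Quat) (B : Matrix (Fin b) (Fin c) Quat)
    (j : Fin c) : (fun i => (P * B) i j) = P.mulVec (fun k => B k j) := by
  funext i; simp [Matrix.mul_apply, Matrix.mulVec, dotProduct]

/-- rows of a full-qRank matrix span everything -/
lemma rows_span_top {k l : ℕ} (M : Matrix (Fin k) (Fin l) Quat)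
    (h : Module.finrank Quat (Submodule.span Quat (Set.range (fun i : Fin k => M i))) = l) :
    Submodule.span Quat (Set.range (fun i : Fin k => M i)) = ⊤ := by
  apply Submodule.eq_top_of_finrank_eq
  rw [h, Module.finrank_pi]
  simp

lemma mulVec_injective_of_rows_span_top {k l : ℕ} (M : Matrix (Fin k) (Fin l) Quat)
    (h : Submodule.span Quat (Set.range (fun i : Fin k => M i)) = ⊤) :
    Function.Injective M.mulVec := by
  have hker : ∀ z, M.mulVec z = 0 → z = 0 := by
    intro z hz
    funext j
    have hj : (Pi.single j 1 : Fin l → Quat) ∈ LinearMap.range M.vecMulLinear := by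
      rw [range_vecMulLinear]; show _ ∈ Submodule.span Quat (Set.range fun i => M i); rw [h]; trivial
    obtain ⟨y, hy⟩ := hj
    have : (Pi.single j 1 : Fin l → Quat) ⬝ᵥ z = y ⬝ᵥ M.mulVec z := by
      rw [Matrix.dotProduct_mulVec, ← hy]; rfl
    rw [hz, dotProduct_zero, single_dotProduct, one_mul] at this
    simpa using this
  intro x y hxy
  have : M.mulVec (x - y) = 0 := by rw [Matrix.mulVec_sub, hxy, sub_self]
  have := hker _ this
  exact sub_eq_zero.mp this

/-- existence of an annihilating "right functional" for a proper left submodule -/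
lemma exists_ann {k : ℕ} (R : Submodule Quat (Fin k → Quat)) (hR : R ≠ ⊤) :
    ∃ y : Fin k → Quat, y ≠ 0 ∧ ∀ v ∈ R, ∑ i, v i * y i = 0 := by
  haveI : Nontrivial ((Fin k → Quat) ⧸ R) :=
    Submodule.Quotient.nontrivial_iff.mpr hR
  let b := Module.Basis.ofVectorSpace Quat ((Fin k → Quat) ⧸ R)
  obtain ⟨i⟩ := b.index_nonempty
  let f : (Fin k → Quat) →ₗ[Quat] Quat := (b.coord i).comp R.mkQ
  have hfv : ∀ v : Fin k → Quat, f v = ∑ j, v j * f (Pi.single j 1) := by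
    intro v
    have hv : v = ∑ j, (v j) • (Pi.single j 1 : Fin k → Quat) := by
      funext t
      simp [Pi.single_apply, Finset.sum_apply]
    conv_lhs => rw [hv]
    rw [map_sum]
    congr 1; funext j
    rw [LinearMap.map_smul]; rfl
  refine ⟨fun j => f (Pi.single j 1), ?_, ?_⟩
  · obtain ⟨w, hw⟩ := R.mkQ_surjective (b i)
    intro hy
    have : f w = 1 := by
      simp only [f, LinearMap.comp_apply, hw, Module.Basis.coord_apply, Module.Basis.repr_self,
        Finsupp.single_eq_same]
    rw [hfv w] at this
    have : (0 : Quat) = 1 := by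
      rw [← this]
      refine (Finset.sum_eq_zero ?_).symm
      intro j _
      have : f (Pi.single j 1) = 0 := congrFun hy j
      rw [this, mul_zero]
    exact zero_ne_one this
  · intro v hv
    rw [← hfv v]
    simp only [f, LinearMap.comp_apply]
    have h0 : R.mkQ v = 0 := (Submodule.Quotient.mk_eq_zero R).mpr hv
    rw [h0, map_zero]


lemma rows_linearIndependent {k l : ℕ} (M : Matrix (Fin k) (Fin l) Quat)
    (h : Module.finrank Quat (Submodule.span Quat (Set.range (fun i : Fin k => M i))) = k) :
    LinearIndependent Quat (fun i : Fin k => M i) := by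
  rw [linearIndependent_iff_card_eq_finrank_span]
  simpa [Set.finrank] using h.symm

lemma mulVec_surjective_of_rows_li {k l : ℕ} (M : Matrix (Fin k) (Fin l) Quat)
    (hli : LinearIndependent Quat (fun i : Fin k => M i)) :
    Function.Surjective M.mulVec := by
  set Rsub := Submodule.span Quat ((fun v => (star ∘ v : Fin k → Quat)) '' Set.range M.mulVec)
    with hRsub
  have hmem : ∀ v ∈ Rsub, (star ∘ v : Fin k → Quat) ∈ Set.range M.mulVec := by
    intro v hv
    induction hv using Submodule.span_induction with
    | mem x hx =>
      obtain ⟨u, ⟨x0, rfl⟩, rfl⟩ := hx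
      exact ⟨x0, by funext i; simp⟩
    | zero => exact ⟨0, by rw [Matrix.mulVec_zero]; funext i; simp⟩
    | add a b _ _ ha hb =>
      obtain ⟨x, hx⟩ := ha; obtain ⟨y, hy⟩ := hb
      refine ⟨x + y, ?_⟩
      rw [Matrix.mulVec_add, hx, hy]
      funext i; simp
    | smul c a _ ha =>
      obtain ⟨x, hx⟩ := ha
      refine ⟨fun j => x j * star c, ?_⟩
      funext i
      have hxi := congrFun hx i
      simp only [Function.comp_apply] at hxi ⊢
      simp only [Matrix.mulVec, dotProduct] at hxi ⊢
      rw [Pi.smul_apply, smul_eq_mul, StarMul.star_mul, ← hxi, Finset.sum_mul]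
      simp [mul_assoc]
  have htop : Rsub = ⊤ := by
    by_contra hne
    obtain ⟨y, hy0, hann⟩ := exists_ann Rsub hne
    have hrow : ∀ j, ∑ i, star (M i j) * y i = 0 := by
      intro j
      have hgen : (star ∘ M.mulVec (Pi.single j 1) : Fin k → Quat) ∈ Rsub :=
        Submodule.subset_span ⟨M.mulVec (Pi.single j 1), ⟨Pi.single j 1, rfl⟩, rfl⟩
      have := hann _ hgen
      simpa [Matrix.mulVec_single] using this
    have hvM : (fun i => star (y i)) ᵥ* M = 0 := by
      funext j
      have := congrArg star (hrow j)
      rw [star_sum, star_zero] at this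
      simp only [StarMul.star_mul, star_star] at this
      simpa [Matrix.vecMul, dotProduct] using this
    have hsum : ∑ i, star (y i) • (fun t => M i t) = (0 : Fin l → Quat) := by
      funext j
      have := congrFun hvM j
      simpa [Matrix.vecMul, dotProduct, Finset.sum_apply] using this
    have hzero : ∀ i, star (y i) = 0 :=
      Fintype.linearIndependent_iff.mp hli (fun i => star (y i)) hsum
    apply hy0
    funext i
    have := congrArg star (hzero i)
    simpa using this
  intro u
  have hu : (star ∘ u : Fin k → Quat) ∈ Rsub := by rw [htop]; trivial
  obtain ⟨x, hx⟩ := hmem _ hu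
  refine ⟨x, ?_⟩
  rw [hx]; funext i; simp

lemma exists_right_factor {a b c : ℕ} (P : Matrix (Fin a) (Fin b) Quat)
    (X : Matrix (Fin a) (Fin c) Quat)
    (h : ∀ j, ∃ u : Fin b → Quat, P.mulVec u = fun i => X i j) :
    ∃ U : Matrix (Fin b) (Fin c) Quat, P * U = X := by
  refine ⟨Matrix.of fun i j => (h j).choose i, ?_⟩
  rw [← Matrix.ext_iff]; intro i j
  have := congrFun (h j).choose_spec i
  rw [← this]
  simp [Matrix.mul_apply, Matrix.mulVec, dotProduct]

lemma mul_eq_zero_of_cols {a b c : ℕ} (P : Matrix (Fin a) (Fin b) Quat)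
    (B : Matrix (Fin b) (Fin c) Quat) (h : ∀ j, P.mulVec (fun k => B k j) = 0) :
    P * B = 0 := by
  rw [← Matrix.ext_iff]; intro i j
  have := congrFun (h j) i
  simpa [Matrix.mul_apply, Matrix.mulVec, dotProduct] using this

lemma cancel_left {a b c : ℕ} (P : Matrix (Fin a) (Fin b) Quat)
    (hP : Function.Injective P.mulVec) {B C : Matrix (Fin b) (Fin c) Quat}
    (h : P * B = P * C) : B = C := by
  rw [← Matrix.ext_iff]; intro k j
  have hcol : P.mulVec (fun t => B t j) = P.mulVec (fun t => C t j) := by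
    funext i
    have := Matrix.ext_iff.2 h i j
    simpa [Matrix.mul_apply, Matrix.mulVec, dotProduct] using this
  exact congrFun (hP hcol) k

end Stmt18Aux

/-- Theorem 3.10: representation of `A^{(2)}_{r,(W₁,W₁)}` via a full rank
factorization `W₁ = S₁ T₁`. -/
theorem stmt18 {m n ν s : ℕ} (A : Matrix (Fin m) (Fin n) Quat) (hA : qRank A = ν)
    (W₁ : Matrix (Fin n) (Fin m) Quat) (hW : qRank W₁ = s) (hsν : s ≤ ν)
    (S₁ : Matrix (Fin n) (Fin s) Quat) (T₁ : Matrix (Fin s) (Fin m) Quat)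
    (hST : W₁ = S₁ * T₁) (hS : qRank S₁ = s) (hT : qRank T₁ = s)
    (X₀ : Matrix (Fin n) (Fin m) Quat)
    (h1 : X₀ * A * X₀ = X₀) (h2 : rightRange X₀ = rightRange W₁)
    (h3 : rightNull X₀ = rightNull W₁) :
    (∃ Q : Matrix (Fin s) (Fin s) Quat, (T₁ * A * S₁) * Q = 1 ∧ Q * (T₁ * A * S₁) = 1) ∧
    (∀ Q : Matrix (Fin s) (Fin s) Quat, (T₁ * A * S₁) * Q = 1 → Q * (T₁ * A * S₁) = 1 →
      X₀ = S₁ * Q * T₁ ∧ rightRange X₀ = rightRange S₁ ∧ rightNull X₀ = rightNull T₁) := by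
  have injS : Function.Injective S₁.mulVec :=
    Stmt18Aux.mulVec_injective_of_rows_span_top S₁ (Stmt18Aux.rows_span_top S₁ hS)
  have surjT : Function.Surjective T₁.mulVec :=
    Stmt18Aux.mulVec_surjective_of_rows_li T₁ (Stmt18Aux.rows_linearIndependent T₁ hT)
  -- right inverse of T₁
  obtain ⟨T', hT'⟩ : ∃ T' : Matrix (Fin m) (Fin s) Quat, T₁ * T' = 1 := by
    apply Stmt18Aux.exists_right_factor
    intro j
    exact surjT _
  -- X₀ = S₁ * U
  obtain ⟨U, hU⟩ : ∃ U : Matrix (Fin s) (Fin m) Quat, S₁ * U = X₀ := by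
    apply Stmt18Aux.exists_right_factor
    intro j
    have hcol : (fun i => X₀ i j) ∈ rightRange X₀ :=
      ⟨Pi.single j 1, by rw [Matrix.mulVec_single]; funext i; simp⟩
    rw [h2] at hcol
    obtain ⟨x, hx⟩ := hcol
    refine ⟨T₁.mulVec x, ?_⟩
    rw [Matrix.mulVec_mulVec, ← hST]
    exact hx.symm
  -- S₁ = X₀ * Y
  obtain ⟨Y, hY⟩ : ∃ Y : Matrix (Fin m) (Fin s) Quat, X₀ * Y = S₁ := by
    apply Stmt18Aux.exists_right_factor
    intro j
    obtain ⟨x, hx⟩ := surjT (Pi.single j 1)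
    have hmem : (fun i => S₁ i j) ∈ rightRange W₁ := by
      refine ⟨x, ?_⟩
      rw [hST, ← Matrix.mulVec_mulVec, hx, Matrix.mulVec_single]
      funext i; simp
    rw [← h2] at hmem
    obtain ⟨u, hu⟩ := hmem
    exact ⟨u, hu.symm⟩
  -- X₀ * (T' * T₁) = X₀
  have hVT : X₀ * (T' * T₁) = X₀ := by
    have hz : X₀ * (1 - T' * T₁) = 0 := by
      apply Stmt18Aux.mul_eq_zero_of_cols
      intro j
      have hTcol : T₁.mulVec (fun k => (1 - T' * T₁ : Matrix (Fin m) (Fin m) Quat) k j) = 0 := by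
        have hTz : T₁ * (1 - T' * T₁) = 0 := by
          rw [Matrix.mul_sub, Matrix.mul_one, ← Matrix.mul_assoc, hT', Matrix.one_mul, sub_self]
        rw [← Stmt18Aux.mul_col, hTz]
        funext i; simp
      have hw : (fun k => (1 - T' * T₁ : Matrix (Fin m) (Fin m) Quat) k j) ∈ rightNull W₁ := by
        show W₁.mulVec _ = 0
        rw [hST, ← Matrix.mulVec_mulVec, hTcol, Matrix.mulVec_zero]
      rw [← h3] at hw
      exact hw
    rw [Matrix.mul_sub, Matrix.mul_one] at hz
    exact (sub_eq_zero.mp hz).symm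
  -- T₁ * (A * X₀) = T₁
  have hTAX : T₁ * (A * X₀) = T₁ := by
    have hz : T₁ * (1 - A * X₀) = 0 := by
      apply Stmt18Aux.mul_eq_zero_of_cols
      intro j
      have hXcol : X₀.mulVec (fun k => (1 - A * X₀ : Matrix (Fin m) (Fin m) Quat) k j) = 0 := by
        have hXz : X₀ * (1 - A * X₀) = 0 := by
          rw [Matrix.mul_sub, Matrix.mul_one, ← Matrix.mul_assoc, h1, sub_self]
        rw [← Stmt18Aux.mul_col, hXz]
        funext i; simp
      have hw : (fun k => (1 - A * X₀ : Matrix (Fin m) (Fin m) Quat) k j) ∈ rightNull X₀ := hXcol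
      rw [h3] at hw
      have hSTz : S₁.mulVec (T₁.mulVec (fun k => (1 - A * X₀ : Matrix (Fin m) (Fin m) Quat) k j))
          = S₁.mulVec 0 := by
        rw [Matrix.mulVec_mulVec, ← hST, Matrix.mulVec_zero]
        exact hw
      exact injS hSTz
    rw [Matrix.mul_sub, Matrix.mul_one] at hz
    exact (sub_eq_zero.mp hz).symm
  -- algebra
  have h1' : X₀ * (A * X₀) = X₀ := by rw [← Matrix.mul_assoc]; exact h1
  have hUY : U * Y = 1 := by
    apply Stmt18Aux.cancel_left S₁ injS
    rw [← Matrix.mul_assoc, hU, hY, Matrix.mul_one]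
  have key : U * (A * (S₁ * U)) = U := by
    apply Stmt18Aux.cancel_left S₁ injS
    rw [hU, ← Matrix.mul_assoc S₁ U, hU, h1']
  have hUAS : U * (A * S₁) = 1 := by
    calc U * (A * S₁) = U * (A * S₁) * (U * Y) := by rw [hUY, Matrix.mul_one]
      _ = U * (A * (S₁ * U)) * Y := by simp only [Matrix.mul_assoc]
      _ = U * Y := by rw [key]
      _ = 1 := hUY
  have hTMU : (T₁ * A * S₁) * U = T₁ := by
    calc (T₁ * A * S₁) * U = T₁ * (A * (S₁ * U)) := by simp only [Matrix.mul_assoc]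
      _ = T₁ * (A * X₀) := by rw [hU]
      _ = T₁ := hTAX
  have hVM : (X₀ * T') * (T₁ * A * S₁) = S₁ := by
    calc (X₀ * T') * (T₁ * A * S₁) = (X₀ * (T' * T₁)) * (A * S₁) := by
          simp only [Matrix.mul_assoc]
      _ = X₀ * (A * S₁) := by rw [hVT]
      _ = X₀ * (A * (X₀ * Y)) := by rw [hY]
      _ = (X₀ * (A * X₀)) * Y := by simp only [Matrix.mul_assoc]
      _ = S₁ := by rw [h1', hY]
  have hMQ : (T₁ * A * S₁) * (U * T') = 1 := by
    rw [← Matrix.mul_assoc, hTMU, hT']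
  have hLM : (U * (A * (X₀ * T'))) * (T₁ * A * S₁) = 1 := by
    calc (U * (A * (X₀ * T'))) * (T₁ * A * S₁)
        = U * (A * ((X₀ * T') * (T₁ * A * S₁))) := by simp only [Matrix.mul_assoc]
      _ = U * (A * S₁) := by rw [hVM]
      _ = 1 := hUAS
  have hQM : (U * T') * (T₁ * A * S₁) = 1 := by
    have heq : (U * T') = (U * (A * (X₀ * T'))) := by
      calc U * T' = 1 * (U * T') := by rw [Matrix.one_mul]
        _ = ((U * (A * (X₀ * T'))) * (T₁ * A * S₁)) * (U * T') := by rw [hLM]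
        _ = (U * (A * (X₀ * T'))) * ((T₁ * A * S₁) * (U * T')) := by
            rw [Matrix.mul_assoc]
        _ = U * (A * (X₀ * T')) := by rw [hMQ, Matrix.mul_one]
    rw [heq, hLM]
  refine ⟨⟨U * T', hMQ, hQM⟩, ?_⟩
  intro Q hQ1 hQ2
  refine ⟨?_, ?_, ?_⟩
  · calc X₀ = S₁ * U := hU.symm
      _ = S₁ * ((Q * (T₁ * A * S₁)) * U) := by rw [hQ2, Matrix.one_mul]
      _ = S₁ * Q * ((T₁ * A * S₁) * U) := by simp only [Matrix.mul_assoc]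
      _ = S₁ * Q * T₁ := by rw [hTMU]
  · ext v
    constructor
    · rintro ⟨x, hx⟩
      exact ⟨U.mulVec x, by rw [hx, ← hU, ← Matrix.mulVec_mulVec]⟩
    · rintro ⟨c, hc⟩
      exact ⟨Y.mulVec c, by rw [hc, ← hY, ← Matrix.mulVec_mulVec]⟩
  · ext x
    constructor
    · intro hx
      show T₁.mulVec x = 0
      have : T₁ = (T₁ * A) * X₀ := by rw [Matrix.mul_assoc, hTAX]
      rw [this, ← Matrix.mulVec_mulVec, hx, Matrix.mulVec_zero]
    · intro hx
      show X₀.mulVec x = 0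
      have hx' : T₁.mulVec x = 0 := hx
      have : X₀ = (X₀ * T') * T₁ := by rw [Matrix.mul_assoc, hVT]
      rw [this, ← Matrix.mulVec_mulVec, hx', Matrix.mulVec_zero]
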